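/- Let N ⊆ ℝ^m be a nonempty closed set and x ∈ ℝ^m \ N a point admitting at least two distinct nearest points in N. Then d_N is not differentiable at x. -/

import Mathlib

open Set Metric

/-- If `x ∉ N` admits two distinct nearest points in the nonempty closed set `N`, then the
distance function `d_N` is not differentiable at `x`. -/
theorem stmt_7 {m : ℕ} (N : Set (EuclideanSpace ℝ (Fin m)))
    (hN : IsClosed N) (hNne : N.Nonempty)
    (x q₁ q₂ : EuclideanSpace ℝ (Fin m)) (hx : x ∉ N) (hq12 : q₁ ≠ q₂)
    (hq₁ : q₁ ∈ N) (hq₂ : q₂ ∈ N)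
    (hd₁ : dist q₁ x = infDist x N) (hd₂ : dist q₂ x = infDist x N) :
    ¬ DifferentiableAt ℝ (fun y => infDist y N) x := by
  intro hdiff
  set d : ℝ := infDist x N with hd
  have hd_pos : 0 < d := (hN.notMem_iff_infDist_pos hNne).mp hx
  set L := fderiv ℝ (fun y => infDist y N) x with hL
  have hF : HasFDerivAt (fun y => infDist y N) L x := hdiff.hasFDerivAt
  -- key: directional derivative toward any nearest point
  have key : ∀ q ∈ N, dist q x = d → L (q - x) = -d := by
    intro q hq hdq
    set g : ℝ → EuclideanSpace ℝ (Fin m) := fun t => x + t • (q - x) with hg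
    have hg0 : g 0 = x := by simp [hg]
    have hginner : HasDerivAt g (q - x) 0 := by
      have := ((hasDerivAt_id (0:ℝ)).smul_const (q - x)).const_add x
      simpa [hg] using this
    have hF' : HasFDerivAt (fun y => infDist y N) L (g 0) := by rw [hg0]; exact hF
    have hcomp : HasDerivAt (fun t => infDist (g t) N) (L (q - x)) 0 :=
      hF'.comp_hasDerivAt 0 hginner
    have hWithin : HasDerivWithinAt (fun t => infDist (g t) N) (L (q - x)) (Ici 0) 0 :=
      hcomp.hasDerivWithinAt
    -- the affine function
    have hlin : HasDerivWithinAt (fun t : ℝ => (1 - t) * d) (-d) (Ici 0) 0 := by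
      have h1 : HasDerivAt (fun t : ℝ => (1 - t) * d) (-1 * d) 0 :=
        ((hasDerivAt_id (0:ℝ)).const_sub 1).mul_const d
      simpa using h1.hasDerivWithinAt
    -- eventual equality on the right
    have heq : (fun t => infDist (g t) N) =ᶠ[nhdsWithin 0 (Ici 0)] (fun t : ℝ => (1 - t) * d) := by
      have hmem : Icc (0:ℝ) 1 ∈ nhdsWithin 0 (Ici 0) := by
        rw [← Ici_inter_Iic]
        exact Filter.inter_mem self_mem_nhdsWithin
          (nhdsWithin_le_nhds (Iic_mem_nhds one_pos))
      filter_upwards [hmem] with t ht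
      have ht0 := ht.1
      have ht1 := ht.2
      have hqx : ‖q - x‖ = d := by rw [← hdq]; rw [dist_eq_norm]
      have hle : infDist (g t) N ≤ (1 - t) * d := by
        calc infDist (g t) N ≤ dist (g t) q := infDist_le_dist_of_mem hq
          _ = ‖(1 - t) • (x - q)‖ := by
              rw [dist_eq_norm]
              congr 1
              rw [hg]
              module
          _ = (1 - t) * d := by
              rw [norm_smul, Real.norm_eq_abs, abs_of_nonneg (by linarith)]
              rw [← neg_sub q x, norm_neg, hqx]
      have hge : (1 - t) * d ≤ infDist (g t) N := by
        have := infDist_le_infDist_add_dist (x := x) (y := g t) (s := N)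
        have hdist : dist x (g t) = t * d := by
          rw [dist_eq_norm, show x - g t = -(t • (q - x)) by simp [hg], norm_neg,
            norm_smul, Real.norm_eq_abs, abs_of_nonneg ht0, hqx]
        rw [hdist] at this
        rw [← hd] at this
        linarith
      linarith
    have heq0 : infDist (g 0) N = (1 - (0:ℝ)) * d := by simp [hg0, hd]
    have hlin' : HasDerivWithinAt (fun t => infDist (g t) N) (-d) (Ici 0) 0 :=
      hlin.congr_of_eventuallyEq heq heq0
    -- uniqueness
    have huniq := (uniqueDiffOn_Ici (0:ℝ)) 0 Set.self_mem_Ici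
    have := huniq.eq_deriv _ hWithin hlin'
    exact this
  have h1 := key q₁ hq₁ hd₁
  have h2 := key q₂ hq₂ hd₂
  have hnormL : ‖L‖ ≤ 1 := by
    have := hF.le_of_lipschitz (lipschitz_infDist_pt N)
    simpa using this
  have hn1 : ‖q₁ - x‖ = d := by rw [← hd₁, dist_eq_norm]
  have hn2 : ‖q₂ - x‖ = d := by rw [← hd₂, dist_eq_norm]
  have hstrict : ‖(q₁ - x) + (q₂ - x)‖ < 2 * d := by
    rcases lt_or_eq_of_le (norm_add_le (q₁ - x) (q₂ - x)) with h | h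
    · rw [hn1, hn2] at h; linarith
    · exfalso
      have := eq_of_norm_eq_of_norm_add_eq (hn1.trans hn2.symm) h
      exact hq12 (sub_left_injective this)
  have hsum : L ((q₁ - x) + (q₂ - x)) = -(2 * d) := by
    rw [map_add, h1, h2]; ring
  have hb : |L ((q₁ - x) + (q₂ - x))| ≤ ‖(q₁ - x) + (q₂ - x)‖ := by
    calc |L ((q₁ - x) + (q₂ - x))| = ‖L ((q₁ - x) + (q₂ - x))‖ := rfl
      _ ≤ ‖L‖ * ‖(q₁ - x) + (q₂ - x)‖ := L.le_opNorm _
      _ ≤ 1 * ‖(q₁ - x) + (q₂ - x)‖ := by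
          apply mul_le_mul_of_nonneg_right hnormL (norm_nonneg _)
      _ = _ := one_mul _
  rw [hsum, abs_neg, abs_of_nonneg (by linarith)] at hb
  linarith
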